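/- Let p > 1, e_1 > 0 be integers, q > 1 real, e = e_1(p−1). For i ∈ [1,e] let a(i) = ⌊(i−1)/(p−1)⌋, t_i = i + a(i), n_i = p(q^i − q^{i−1})/(p−1), and set t_{e+1} = p·e_1, n_{e+1} = p·q^e. Then (p−1)·Σ_{i=1}^{e+1} (t_i + 1)·n_i = p·( (e_1 p² + p − 1)·q^e − (q^e − 1)/(q − 1) − (q^e − 1)/(q^{p−1} − 1) ). -/

import Mathlib

/-- Abel-type inner sum, multiplied by `q - 1`. -/
lemma innerB (q C : ℝ) (E : ℕ) : ∀ m : ℕ,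
    (q - 1) * ∑ r ∈ Finset.range m, (C + r) * (q ^ (E + 1 + r) - q ^ (E + r)) =
      (q - 1) * ((C + m) * q ^ (E + m) - C * q ^ E) - (q ^ (E + m + 1) - q ^ (E + 1)) := by
  intro m
  induction m with
  | zero => simp
  | succ m ih =>
      rw [Finset.sum_range_succ, mul_add]
      rw [ih]
      push_cast
      ring

/-- Key closed form for the partial sums, multiplied by `(q-1)*(q^(p-1)-1)`. -/
lemma keyS (p : ℕ) (hp : 1 < p) (q : ℝ) : ∀ e₁ : ℕ,
    (q - 1) * (q ^ (p - 1) - 1) *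
        ∑ j ∈ Finset.range (e₁ * (p - 1)),
          ((j + 1 + j / (p - 1) : ℕ) + 1 : ℝ) * (q ^ (j + 1) - q ^ j) =
      (q - 1) * (q ^ (p - 1) - 1) * ((e₁ : ℝ) * p) * q ^ (e₁ * (p - 1)) -
        (q ^ (p - 1) - 1) * (q ^ (e₁ * (p - 1)) - 1) -
        (q - 1) * (q ^ (e₁ * (p - 1)) - 1) := by
  intro e₁
  induction e₁ with
  | zero => simp
  | succ e₁ ih =>
      have hmul : (e₁ + 1) * (p - 1) = e₁ * (p - 1) + (p - 1) := by ring
      rw [hmul, Finset.sum_range_add]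
      have hterm : ∀ r ∈ Finset.range (p - 1),
          ((e₁ * (p - 1) + r + 1 + (e₁ * (p - 1) + r) / (p - 1) : ℕ) + 1 : ℝ) *
              (q ^ (e₁ * (p - 1) + r + 1) - q ^ (e₁ * (p - 1) + r)) =
            (((e₁ * (p - 1) : ℕ) : ℝ) + e₁ + 2 + r) *
              (q ^ (e₁ * (p - 1) + 1 + r) - q ^ (e₁ * (p - 1) + r)) := by
        intro r hr
        rw [Finset.mem_range] at hr
        have hdiv : (e₁ * (p - 1) + r) / (p - 1) = e₁ := by
          rw [Nat.mul_comm, Nat.mul_add_div (by omega : 0 < p - 1),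
            Nat.div_eq_of_lt hr, Nat.add_zero]
        rw [hdiv]
        push_cast
        ring_nf
      rw [Finset.sum_congr rfl hterm]
      have hB := innerB q (((e₁ * (p - 1) : ℕ) : ℝ) + e₁ + 2) (e₁ * (p - 1)) (p - 1)
      push_cast [Nat.cast_sub (by omega : 1 ≤ p)] at ih hB ⊢
      linear_combination ih + (q ^ (p - 1) - 1) * hB

theorem stmt7 (p e₁ : ℕ) (hp : 1 < p) (he : 0 < e₁) (q : ℝ) (hq : 1 < q) :
    ∀ (e : ℕ), e = e₁ * (p - 1) →
    ∀ (a t : ℕ → ℕ) (n : ℕ → ℝ),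
      (∀ i, a i = (i - 1) / (p - 1)) →
      (∀ i, i ≤ e → t i = i + a i) → t (e + 1) = p * e₁ →
      (∀ i, i ≤ e → n i = p * (q ^ i - q ^ (i - 1)) / (p - 1)) → n (e + 1) = p * q ^ e →
      (p - 1 : ℝ) * ∑ i ∈ Finset.Icc 1 (e + 1), ((t i : ℝ) + 1) * n i =
        p * (((e₁ : ℝ) * p ^ 2 + p - 1) * q ^ e - (q ^ e - 1) / (q - 1)
          - (q ^ e - 1) / (q ^ (p - 1) - 1)) := by
  intro e he a t n ha ht hte hn hne
  subst he
  set E := e₁ * (p - 1) with hE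
  have h3 : (p : ℝ) - 1 ≠ 0 := by
    have : (1 : ℝ) < p := by exact_mod_cast hp
    linarith
  have hq0 : q - 1 ≠ 0 := by linarith
  have hq2 : q ^ (p - 1) - 1 ≠ 0 := by
    have : (1 : ℝ) < q ^ (p - 1) := one_lt_pow₀ hq (by omega)
    linarith
  rw [Finset.sum_Icc_succ_top (by omega : 1 ≤ E + 1), hte, hne]
  have hsum : ∑ i ∈ Finset.Icc 1 E, ((t i : ℝ) + 1) * n i =
      (p : ℝ) / ((p : ℝ) - 1) *
        ∑ j ∈ Finset.range E, ((j + 1 + j / (p - 1) : ℕ) + 1 : ℝ) * (q ^ (j + 1) - q ^ j) := by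
    rw [Finset.mul_sum, ← Finset.Ico_add_one_right_eq_Icc, Finset.sum_Ico_eq_sum_range]
    simp only [Nat.add_sub_cancel]
    refine Finset.sum_congr rfl ?_
    intro j hj
    rw [Finset.mem_range] at hj
    rw [ht (1 + j) (by omega), ha, hn (1 + j) (by omega)]
    have h1 : 1 + j - 1 = j := by omega
    rw [h1]
    have h2 : 1 + j + j / (p - 1) = j + 1 + j / (p - 1) := by omega
    rw [h2]
    push_cast
    ring
  rw [hsum]
  have hK := keyS p hp q e₁
  push_cast [Nat.cast_sub (by omega : 1 ≤ p)] at hK ⊢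
  field_simp
  linear_combination hK
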